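/- arXiv:2006.00374 — 5 statements merged into one kernel-verified Lean document; each statement's English description precedes it below -/
import Mathlib

section
/- Let G be a group and let a, b, h, c be elements of G with c = h⁻¹ a h. If c and b commute, then the commutator [a,b] = a b a⁻¹ b⁻¹ equals h · (c h⁻¹ c⁻¹) · (c b h c⁻¹ b⁻¹) · (b h⁻¹ b⁻¹); i.e., [a,b] is a product of two conjugates of h and two conjugates of h⁻¹. -/
/-- The commutator `[a,b]` as a product of two conjugates of `h` and two of `h⁻¹`. -/
theorem stmt_0 {G : Type*} [Group G] (a b h c : G) (hc : c = h⁻¹ * a * h)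
    (hcomm : c * b = b * c) :
    a * b * a⁻¹ * b⁻¹ =
      h * (c * h⁻¹ * c⁻¹) * (c * b * h * c⁻¹ * b⁻¹) * (b * h⁻¹ * b⁻¹) := by
  subst hc
  group
end

section
/- Let G be a group equal to a direct product ∏_{j=1}^J G_j of groups, let S be a group, and let φ_j : S → G_j be homomorphisms whose images normally generate G_j for each j. Let Δ : S → G be the diagonal homomorphism s ↦ (φ_1(s), ..., φ_J(s)). If each G_j is perfect and each φ_j(S) normally generates G_j, then the normal closure of the image of Δ in G is all of G. -/
/-- If each `G j` is perfect and each `φ j` has image normally generating `G j`, then the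
diagonal homomorphism's image normally generates the direct product. -/
theorem stmt_9 {J : ℕ} (Gj : Fin J → Type*) [∀ j, Group (Gj j)] {S : Type*} [Group S]
    (φ : ∀ j, S →* Gj j)
    (hperf : ∀ j, commutator (Gj j) = ⊤)
    (hgen : ∀ j, Subgroup.normalClosure (Set.range (φ j)) = ⊤) :
    Subgroup.normalClosure (Set.range (Pi.monoidHom φ)) = (⊤ : Subgroup (∀ j, Gj j)) := by
  set N := Subgroup.normalClosure (Set.range (Pi.monoidHom φ)) with hN
  have hNnormal : N.Normal := Subgroup.normalClosure_normal
  -- projection of N to each factor is everything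
  have hproj : ∀ j, N.map (Pi.evalMonoidHom Gj j) = ⊤ := by
    intro j
    rw [hN, Subgroup.map_normalClosure _ _ (fun g => ⟨Pi.mulSingle j g, by simp⟩)]
    have : (Pi.evalMonoidHom Gj j) '' Set.range (Pi.monoidHom φ) = Set.range (φ j) := by
      ext g
      constructor
      · rintro ⟨x, ⟨s, rfl⟩, rfl⟩; exact ⟨s, rfl⟩
      · rintro ⟨s, rfl⟩; exact ⟨Pi.monoidHom φ s, ⟨s, rfl⟩, rfl⟩
    rw [this, hgen j]
  -- each mulSingle lands in N
  have hsingle : ∀ j (a : Gj j), Pi.mulSingle j a ∈ N := by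
    intro j a
    have hle : (⊤ : Subgroup (Gj j)) ≤ N.comap (MonoidHom.mulSingle Gj j) := by
      rw [← hperf j, commutator_eq_closure, Subgroup.closure_le]
      rintro _ ⟨a, b, rfl⟩
      -- get x ∈ N with x j = a
      have : a ∈ N.map (Pi.evalMonoidHom Gj j) := by rw [hproj j]; trivial
      obtain ⟨x, hx, rfl⟩ := this
      open scoped commutatorElement in
      have hyN : ⁅x, Pi.mulSingle j b⁆ ∈ N := by
        have : (Pi.mulSingle j b) * x⁻¹ * (Pi.mulSingle j b)⁻¹ ∈ N :=
          hNnormal.conj_mem _ (N.inv_mem hx) _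
        simpa [commutatorElement_def, mul_assoc] using N.mul_mem hx this
      open scoped commutatorElement in
      have heq : ⁅x, Pi.mulSingle j b⁆ = Pi.mulSingle j ⁅(Pi.evalMonoidHom Gj j) x, b⁆ := by
        funext i
        rcases eq_or_ne i j with rfl | hij
        · simp [commutatorElement_def, Pi.evalMonoidHom]
        · simp [commutatorElement_def, Pi.mulSingle_eq_of_ne hij]
      simp only [Subgroup.mem_comap, SetLike.mem_coe]
      rw [MonoidHom.mulSingle_apply, ← heq]
      exact hyN
    simpa using hle (Subgroup.mem_top a)
  rw [eq_top_iff]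
  intro x _
  classical
  rw [← Finset.noncommProd_mulSingle x]
  exact Subgroup.noncommProd_mem _ _ fun i _ => hsingle i (x i)
end

section
/- Every non-central element of SU(2) normally generates SU(2): if g ∈ SU(2) with g ≠ ±I, then the normal closure of {g} in SU(2) equals SU(2). -/
open Quaternion Matrix

noncomputable section

def dotQ (v w : ℍ[ℝ]) : ℝ := v.imI * w.imI + v.imJ * w.imJ + v.imK * w.imK

theorem exists_orth (v : ℍ[ℝ]) (hv : v ≠ 0) (hre : v.re = 0) :
    ∃ w : ℍ[ℝ], w.re = 0 ∧ normSq w = 1 ∧ dotQ v w = 0 := by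
  by_cases h : v.imI = 0 ∧ v.imJ = 0
  · exact ⟨⟨0, 1, 0, 0⟩, rfl, by erw [Quaternion.normSq_def']; norm_num,
      by simp [dotQ, h.1, h.2]⟩
  · have hd : 0 < v.imI ^ 2 + v.imJ ^ 2 := by
      rcases (not_and_or.mp h) with h1 | h1 <;>
        nlinarith [sq_nonneg v.imI, sq_nonneg v.imJ, pow_pos (abs_pos.mpr h1) 2,
          sq_abs v.imI, sq_abs v.imJ]
    set s := Real.sqrt (v.imI ^ 2 + v.imJ ^ 2) with hs
    have hspos : 0 < s := Real.sqrt_pos.mpr hd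
    have hs2 : s ^ 2 = v.imI ^ 2 + v.imJ ^ 2 := Real.sq_sqrt hd.le
    refine ⟨⟨0, -v.imJ / s, v.imI / s, 0⟩, rfl, ?_, by simp [dotQ]; field_simp; ring⟩
    erw [Quaternion.normSq_def']
    show (0:ℝ) ^ 2 + (-v.imJ / s) ^ 2 + (v.imI / s) ^ 2 + 0 ^ 2 = 1
    field_simp
    linarith [hs2]

theorem pure_sq (v : ℍ[ℝ]) (hre : v.re = 0) : v * v = -((normSq v : ℝ) : ℍ[ℝ]) := by
  apply Quaternion.ext <;>
    simp [Quaternion.re_mul, Quaternion.imI_mul, Quaternion.imJ_mul, Quaternion.imK_mul,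
      Quaternion.normSq_def', hre, ← Quaternion.coe_pow] <;> ring

theorem pure_anticomm (u v : ℍ[ℝ]) (hu : u.re = 0) (hv : v.re = 0)
    (hd : dotQ u v = 0) : u * v = -(v * u) := by
  have hd' : u.imI * v.imI + u.imJ * v.imJ + u.imK * v.imK = 0 := hd
  apply Quaternion.ext <;>
    simp [Quaternion.re_mul, Quaternion.imI_mul, Quaternion.imJ_mul, Quaternion.imK_mul,
      hu, hv] <;> linarith [hd']

theorem exists_unit_conj (u0 : ℍ[ℝ]) (h0 : u0 ≠ 0) (p q : ℍ[ℝ]) (h : u0 * p = q * u0) :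
    ∃ u : ℍ[ℝ], normSq u = 1 ∧ u * p = q * u := by
  have hn : 0 < normSq u0 := lt_of_le_of_ne normSq_nonneg (fun h' => h0 (normSq_eq_zero.mp h'.symm))
  set s := Real.sqrt (normSq u0) with hs
  refine ⟨s⁻¹ • u0, ?_, ?_⟩
  · rw [normSq_smul, inv_pow, hs, Real.sq_sqrt hn.le, inv_mul_cancel₀ (ne_of_gt hn)]
  · rw [smul_mul_assoc, h, mul_smul_comm]

theorem pure_of_re_eq (p : ℍ[ℝ]) : (p - ((p.re : ℝ) : ℍ[ℝ])).re = 0 := by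
  simp [Quaternion.re_coe]

theorem normSq_im (p : ℍ[ℝ]) (hp : normSq p = 1) :
    normSq (p - ((p.re : ℝ) : ℍ[ℝ])) = 1 - p.re ^ 2 := by
  rw [Quaternion.normSq_def'] at hp ⊢
  simp [Quaternion.re_coe]
  linarith [hp]

theorem conj_lemma (p q : ℍ[ℝ]) (hp : normSq p = 1) (hq : normSq q = 1) (hre : p.re = q.re) :
    ∃ u : ℍ[ℝ], normSq u = 1 ∧ u * p = q * u := by
  set v := p - ((p.re : ℝ) : ℍ[ℝ]) with hv
  set w := q - ((q.re : ℝ) : ℍ[ℝ]) with hw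
  have hvre : v.re = 0 := pure_of_re_eq p
  have hwre : w.re = 0 := pure_of_re_eq q
  have hnv : normSq v = 1 - p.re ^ 2 := normSq_im p hp
  have hnw : normSq w = 1 - p.re ^ 2 := by rw [hre]; exact normSq_im q hq
  have hpd : p = ((p.re : ℝ) : ℍ[ℝ]) + v := by rw [hv]; noncomm_ring
  have hqd : q = ((p.re : ℝ) : ℍ[ℝ]) + w := by rw [hre, hw]; noncomm_ring
  suffices hsuff : ∃ u : ℍ[ℝ], normSq u = 1 ∧ u * v = w * u by
    obtain ⟨u, hu1, hu2⟩ := hsuff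
    refine ⟨u, hu1, ?_⟩
    rw [hpd, hqd, mul_add, add_mul, hu2, Quaternion.coe_commute p.re u |>.eq]
  by_cases hv0 : v = 0
  · have hw0 : w = 0 := by
      have : normSq w = 0 := by rw [hnw, ← hnv, hv0, map_zero]
      exact normSq_eq_zero.mp this
    exact ⟨1, map_one normSq, by rw [hv0, hw0]; simp⟩
  · by_cases hwv : w = -v
    · obtain ⟨z, hz1, hz2, hz3⟩ := exists_orth v hv0 hvre
      refine ⟨z, hz2, ?_⟩
      rw [hwv, neg_mul, ← pure_anticomm z v hz1 hvre (by unfold dotQ at hz3 ⊢; linarith [hz3])]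
    · set u0 := ((normSq v : ℝ) : ℍ[ℝ]) - w * v with hu0
      have h0 : u0 ≠ 0 := by
        intro h0
        rw [hu0] at h0
        have hwv' : w * v = ((normSq v : ℝ) : ℍ[ℝ]) := (sub_eq_zero.mp h0).symm
        have h2' : w * (v * v) = ((normSq v : ℝ) : ℍ[ℝ]) * v := by rw [← mul_assoc, hwv']
        rw [pure_sq v hvre] at h2'
        have h2 : ((normSq v : ℝ) : ℍ[ℝ]) * (w + v) = 0 := by
          calc ((normSq v : ℝ) : ℍ[ℝ]) * (w + v)
              = ((normSq v : ℝ) : ℍ[ℝ]) * w + ((normSq v : ℝ) : ℍ[ℝ]) * v := mul_add _ _ _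
            _ = ((normSq v : ℝ) : ℍ[ℝ]) * w + w * -((normSq v : ℝ) : ℍ[ℝ]) := by rw [← h2']
            _ = ((normSq v : ℝ) : ℍ[ℝ]) * w - w * ((normSq v : ℝ) : ℍ[ℝ]) := by noncomm_ring
            _ = ((normSq v : ℝ) : ℍ[ℝ]) * w - ((normSq v : ℝ) : ℍ[ℝ]) * w := by
                rw [(Quaternion.coe_commute (normSq v) w).eq]
            _ = 0 := sub_self _
        rcases mul_eq_zero.mp h2 with h3 | h3
        · have : normSq v = 0 := Quaternion.coe_injective (by simpa using h3)
          exact hv0 (normSq_eq_zero.mp this)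
        · exact hwv (eq_neg_of_add_eq_zero_left h3)
      have hconj : u0 * v = w * u0 := by
        have hww : w * w = -((normSq v : ℝ) : ℍ[ℝ]) := by rw [pure_sq w hwre, hnw, ← hnv]
        calc u0 * v
            = ((normSq v : ℝ) : ℍ[ℝ]) * v - w * (v * v) := by rw [hu0]; noncomm_ring
          _ = ((normSq v : ℝ) : ℍ[ℝ]) * v + w * ((normSq v : ℝ) : ℍ[ℝ]) := by
              rw [pure_sq v hvre]; noncomm_ring
          _ = w * ((normSq v : ℝ) : ℍ[ℝ]) - (w * w) * v := by
              rw [hww]; noncomm_ring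
          _ = w * u0 := by rw [hu0]; noncomm_ring
      exact exists_unit_conj u0 h0 v w hconj

theorem realize_lemma (q : ℍ[ℝ]) (hq : normSq q = 1) (hc1 : -1 < q.re) (hc2 : q.re < 1)
    (t : ℝ) (ht1 : 2 * q.re ^ 2 - 1 ≤ t) (ht2 : t ≤ 1) :
    ∃ r : ℍ[ℝ], normSq r = 1 ∧ r.re = q.re ∧ (q * r).re = t := by
  have hs2 : (0:ℝ) < 1 - q.re ^ 2 := by nlinarith
  set c := q.re with hc
  set v := q - ((q.re : ℝ) : ℍ[ℝ]) with hv
  have hvre : v.re = 0 := pure_of_re_eq q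
  have hnv : normSq v = 1 - c ^ 2 := normSq_im q hq
  have hv0 : v ≠ 0 := by
    intro h0
    rw [h0, map_zero] at hnv
    linarith
  set lam := (t - c ^ 2) / (1 - c ^ 2) with hlam
  have hlam1 : -1 ≤ lam := (le_div_iff₀ hs2).mpr (by nlinarith)
  have hlam2 : lam ≤ 1 := (div_le_one hs2).mpr (by nlinarith)
  have hlamt : lam * (1 - c ^ 2) = t - c ^ 2 := div_mul_cancel₀ _ (ne_of_gt hs2)
  set mu := Real.sqrt (1 - lam ^ 2) with hmu
  have hmu2 : mu ^ 2 = 1 - lam ^ 2 := Real.sq_sqrt (by nlinarith)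
  set s := Real.sqrt (1 - c ^ 2) with hsdef
  have hsqs : s ^ 2 = 1 - c ^ 2 := Real.sq_sqrt hs2.le
  obtain ⟨w', hw're, hw'ns, hw'd⟩ := exists_orth v hv0 hvre
  set W := lam • v + (mu * s) • w' with hW
  -- component facts
  have hvI : v.imI = q.imI := by rw [hv]; simp
  have hvJ : v.imJ = q.imJ := by rw [hv]; simp
  have hvK : v.imK = q.imK := by rw [hv]; simp
  have hWre : W.re = 0 := by rw [hW]; simp [hvre, hw're]
  have hWI : W.imI = lam * v.imI + (mu * s) * w'.imI := by rw [hW]; simp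
  have hWJ : W.imJ = lam * v.imJ + (mu * s) * w'.imJ := by rw [hW]; simp
  have hWK : W.imK = lam * v.imK + (mu * s) * w'.imK := by rw [hW]; simp
  have e1 : v.imI ^ 2 + v.imJ ^ 2 + v.imK ^ 2 = 1 - c ^ 2 := by
    rw [Quaternion.normSq_def'] at hnv; rw [hvre] at hnv; linarith [hnv]
  have e2 : w'.imI ^ 2 + w'.imJ ^ 2 + w'.imK ^ 2 = 1 := by
    rw [Quaternion.normSq_def'] at hw'ns; rw [hw're] at hw'ns; linarith [hw'ns]
  have e3 : v.imI * w'.imI + v.imJ * w'.imJ + v.imK * w'.imK = 0 := hw'd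
  have e4 : mu ^ 2 * s ^ 2 = (1 - lam ^ 2) * (1 - c ^ 2) := by rw [hmu2, hsqs]
  have hWns : W.imI ^ 2 + W.imJ ^ 2 + W.imK ^ 2 = 1 - c ^ 2 := by
    rw [hWI, hWJ, hWK]
    linear_combination lam ^ 2 * e1 + (mu ^ 2 * s ^ 2) * e2 + (2 * lam * mu * s) * e3 + e4
  refine ⟨⟨c, -W.imI, -W.imJ, -W.imK⟩, ?_, rfl, ?_⟩
  · erw [Quaternion.normSq_def']
    show c ^ 2 + (-W.imI) ^ 2 + (-W.imJ) ^ 2 + (-W.imK) ^ 2 = 1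
    linear_combination hWns
  · erw [Quaternion.re_mul]
    show c * c - q.imI * (-W.imI) - q.imJ * (-W.imJ) - q.imK * (-W.imK) = t
    rw [← hvI, ← hvJ, ← hvK, hWI, hWJ, hWK]
    linear_combination lam * e1 + (mu * s) * e3 + hlamt

noncomputable def Phi (q : ℍ[ℝ]) : Matrix (Fin 2) (Fin 2) ℂ :=
  !![⟨q.re, q.imI⟩, ⟨-q.imJ, -q.imK⟩; ⟨q.imJ, -q.imK⟩, ⟨q.re, -q.imI⟩]

theorem Phi_one : Phi 1 = 1 := by
  ext i j
  fin_cases i <;> fin_cases j <;>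
    simp [Phi, Complex.ext_iff, Matrix.one_apply]

theorem Phi_mul (q r : ℍ[ℝ]) : Phi (q * r) = Phi q * Phi r := by
  ext i j
  fin_cases i <;> fin_cases j <;>
    simp [Phi, Matrix.mul_apply, Fin.sum_univ_two, Complex.ext_iff,
      Quaternion.re_mul, Quaternion.imI_mul, Quaternion.imJ_mul, Quaternion.imK_mul,
      Complex.mul_re, Complex.mul_im] <;>
    exact ⟨by ring, by ring⟩

theorem Phi_star (q : ℍ[ℝ]) : Phi (star q) = (Phi q)ᴴ := by
  ext i j
  fin_cases i <;> fin_cases j <;>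
    simp [Phi, Complex.ext_iff, Matrix.conjTranspose_apply]

theorem Phi_det (q : ℍ[ℝ]) : (Phi q).det = (normSq q : ℝ) := by
  simp [Phi, Matrix.det_fin_two_of, Quaternion.normSq_def', Complex.ext_iff,
    Complex.mul_re, Complex.mul_im, ← Complex.ofReal_pow]
  exact ⟨by ring, by ring⟩

theorem Phi_inj {q r : ℍ[ℝ]} (h : Phi q = Phi r) : q = r := by
  have h00 := congrFun (congrFun h 0) 0
  have h10 := congrFun (congrFun h 1) 0
  simp [Phi, Complex.ext_iff] at h00 h10
  apply Quaternion.ext <;> tauto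

theorem Phi_neg_one : Phi (-1) = -1 := by
  ext i j
  fin_cases i <;> fin_cases j <;>
    simp [Phi, Complex.ext_iff, Matrix.one_apply, Matrix.neg_apply]

/-- `SU(2)` as the subgroup of the unitary group `U(2)` of matrices of determinant `1`. -/
def SU2 : Subgroup (Matrix.unitaryGroup (Fin 2) ℂ) where
  carrier := {g | (g : Matrix (Fin 2) (Fin 2) ℂ).det = 1}
  one_mem' := by simp
  mul_mem' := by
    intro a b ha hb
    simp only [Set.mem_setOf_eq] at *
    simp [Matrix.det_mul, ha, hb]
  inv_mem' := by
    intro a ha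
    simp only [Set.mem_setOf_eq] at *
    rw [Matrix.UnitaryGroup.inv_val, Matrix.star_eq_conjTranspose,
      Matrix.det_conjTranspose, ha]
    exact star_one ℂ

def PhiU (q : ℍ[ℝ]) (h : normSq q = 1) : ↥SU2 :=
  ⟨⟨Phi q, by
      rw [Matrix.mem_unitaryGroup_iff, Matrix.star_eq_conjTranspose, ← Phi_star, ← Phi_mul,
        Quaternion.self_mul_star, h]
      simpa using Phi_one⟩, by
    show (Phi q).det = 1
    rw [Phi_det, h]; simp⟩

theorem PhiU_coe (q : ℍ[ℝ]) (h : normSq q = 1) :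
    ((PhiU q h : Matrix.unitaryGroup (Fin 2) ℂ) : Matrix (Fin 2) (Fin 2) ℂ) = Phi q := rfl

theorem PhiU_mul (q r : ℍ[ℝ]) (hq : normSq q = 1) (hr : normSq r = 1) :
    PhiU q hq * PhiU r hr = PhiU (q * r) (by rw [map_mul normSq q r, hq, hr, one_mul]) := by
  apply Subtype.ext; apply Subtype.ext
  show Phi q * Phi r = Phi (q * r)
  rw [Phi_mul]

theorem PhiU_inv (q : ℍ[ℝ]) (h : normSq q = 1) :
    (PhiU q h)⁻¹ = PhiU (star q) (by rw [normSq_star, h]) := by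
  apply Subtype.ext; apply Subtype.ext
  show (((PhiU q h)⁻¹ : Matrix.unitaryGroup (Fin 2) ℂ) : Matrix (Fin 2) (Fin 2) ℂ) = Phi (star q)
  rw [Phi_star]
  rfl

theorem PhiU_surj (U : ↥SU2) : ∃ q : ℍ[ℝ], ∃ h : normSq q = 1, PhiU q h = U := by
  obtain ⟨⟨A, hA⟩, hdet⟩ := U
  have hdet' : A.det = 1 := hdet
  -- star A = adjugate A
  have h1 : star A * A = 1 := (Matrix.mem_unitaryGroup_iff').mp hA
  have h2 : A * A.adjugate = 1 := by
    rw [Matrix.mul_adjugate, hdet', one_smul]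
  have h3 : star A = A.adjugate := by
    calc star A = star A * (A * A.adjugate) := by rw [h2, mul_one]
    _ = (star A * A) * A.adjugate := by rw [mul_assoc]
    _ = A.adjugate := by rw [h1, one_mul]
  have hadj : A.adjugate = !![A 1 1, -A 0 1; -A 1 0, A 0 0] := Matrix.adjugate_fin_two A
  rw [hadj] at h3
  have e11 : (starRingEnd ℂ) (A 0 0) = A 1 1 := by
    have := congrFun (congrFun h3 0) 0
    simpa [Matrix.star_eq_conjTranspose, Matrix.conjTranspose_apply] using this
  have e01 : (starRingEnd ℂ) (A 1 0) = -A 0 1 := by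
    have := congrFun (congrFun h3 0) 1
    simpa [Matrix.star_eq_conjTranspose, Matrix.conjTranspose_apply] using this
  refine ⟨⟨(A 0 0).re, (A 0 0).im, (A 1 0).re, -(A 1 0).im⟩, ?_, ?_⟩
  · -- normSq = 1
    have hd : A.det = A 0 0 * A 1 1 - A 0 1 * A 1 0 := Matrix.det_fin_two A
    rw [hdet'] at hd
    have : (1:ℂ) = A 0 0 * (starRingEnd ℂ) (A 0 0) + (starRingEnd ℂ) (A 1 0) * A 1 0 := by
      rw [e11, e01] at *
      rw [hd]; ring
    have hre := congrArg Complex.re this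
    simp [Complex.mul_re, Complex.add_re, Complex.conj_re, Complex.conj_im] at hre
    erw [Quaternion.normSq_def']
    simp only []
    nlinarith [hre]
  · apply Subtype.ext; apply Subtype.ext
    show Phi _ = A
    have hA11 : A 1 1 = (starRingEnd ℂ) (A 0 0) := e11.symm
    have hA01 : A 0 1 = -(starRingEnd ℂ) (A 1 0) := by rw [e01, neg_neg]
    ext i j
    fin_cases i <;> fin_cases j <;>
      simp [Phi, Complex.ext_iff, hA11, hA01]

theorem PhiU_congr {q r : ℍ[ℝ]} (h : q = r) (hq : normSq q = 1) (hr : normSq r = 1) :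
    PhiU q hq = PhiU r hr := by subst h; rfl

def PP (N : Subgroup ↥SU2) (t : ℝ) : Prop :=
  ∃ q : ℍ[ℝ], ∃ h : normSq q = 1, q.re = t ∧ PhiU q h ∈ N

theorem key_conj {N : Subgroup ↥SU2} (hN : N.Normal) {p : ℍ[ℝ]} (hp : normSq p = 1)
    {x : ↥SU2} (hx : x ∈ N) {q : ℍ[ℝ]} (hq : normSq q = 1)
    (hPhi : PhiU q hq = x) {u : ℍ[ℝ]} (hu : normSq u = 1) (huc : u * q = p * u) :
    PhiU p hp ∈ N := by
  have hustar : normSq (star u) = 1 := by rw [normSq_star, hu]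
  have hq' : u * q * star u = p := by
    rw [huc, mul_assoc, Quaternion.self_mul_star, hu]
    simp
  have : PhiU u hu * x * (PhiU u hu)⁻¹ ∈ N := hN.conj_mem x hx (PhiU u hu)
  have heq : PhiU u hu * x * (PhiU u hu)⁻¹ = PhiU p hp := by
    rw [← hPhi, PhiU_inv, PhiU_mul, PhiU_mul]
    exact PhiU_congr hq' _ _
  rwa [heq] at this

theorem stepA {N : Subgroup ↥SU2} (hN : N.Normal) {c : ℝ} (hP : PP N c)
    (h1 : -1 < c) (h2 : c < 1) {t : ℝ} (ht1 : 2 * c ^ 2 - 1 ≤ t) (ht2 : t ≤ 1) : PP N t := by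
  obtain ⟨q, hq, hqre, hqN⟩ := hP
  subst hqre
  obtain ⟨r, hr, hrre, hqrre⟩ := realize_lemma q hq h1 h2 t ht1 ht2
  -- r is conjugate to star q
  obtain ⟨u, hu, huc⟩ := conj_lemma (star q) r (by rw [normSq_star, hq]) hr
    (by rw [Quaternion.re_star, hrre])
  -- y := conj by u of x⁻¹ is in N; x * y = PhiU (q * r)
  have hstarq : normSq (star q) = 1 := by rw [normSq_star, hq]
  have hxinv : (PhiU q hq)⁻¹ ∈ N := inv_mem hqN
  have hyN : PhiU r hr ∈ N := key_conj hN hr hxinv hstarq (PhiU_inv q hq).symm hu huc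
  have hqr : normSq (q * r) = 1 := by rw [map_mul normSq q r, hq, hr, one_mul]
  refine ⟨q * r, hqr, hqrre, ?_⟩
  have : PhiU q hq * PhiU r hr ∈ N := mul_mem hqN hyN
  rwa [PhiU_mul] at this

theorem stepD {N : Subgroup ↥SU2} (hN : N.Normal) :
    ∀ n : ℕ, ∀ c : ℝ, -1 < c → c < 1 → 1 / 2 ≤ 2 ^ n * (1 - c ^ 2) → PP N c → PP N 0 := by
  intro n
  induction n with
  | zero =>
    intro c h1 h2 hb hP
    exact stepA hN hP h1 h2 (by nlinarith) (by norm_num)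
  | succ n ih =>
    intro c h1 h2 hb hP
    by_cases hc : 1 / 2 ≤ 1 - c ^ 2
    · exact stepA hN hP h1 h2 (by nlinarith) (by norm_num)
    · push_neg at hc
      have hc2 : 1 / 2 < c ^ 2 := by linarith
      have h1' : -1 < 2 * c ^ 2 - 1 := by nlinarith
      have h2' : 2 * c ^ 2 - 1 < 1 := by nlinarith
      have hP' : PP N (2 * c ^ 2 - 1) := stepA hN hP h1 h2 le_rfl (by nlinarith)
      apply ih (2 * c ^ 2 - 1) h1' h2' _ hP'
      have key : 2 * (1 - c ^ 2) ≤ 1 - (2 * c ^ 2 - 1) ^ 2 := by nlinarith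
      have : (2:ℝ) ^ (n+1) * (1 - c ^ 2) = 2 ^ n * (2 * (1 - c ^ 2)) := by ring
      nlinarith [pow_pos (by norm_num : (0:ℝ) < 2) n, mul_le_mul_of_nonneg_left key
        (le_of_lt (pow_pos (by norm_num : (0:ℝ) < 2) n))]

theorem memN {N : Subgroup ↥SU2} (hN : N.Normal) (h0 : PP N 0) (U : ↥SU2) : U ∈ N := by
  obtain ⟨p, hp, hPU⟩ := PhiU_surj U
  have hbound : p.re ^ 2 ≤ 1 := by
    have := Quaternion.normSq_def' (a := p) ▸ hp
    nlinarith [sq_nonneg p.imI, sq_nonneg p.imJ, sq_nonneg p.imK, this]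
  have hPt : PP N p.re := stepA hN h0 (by norm_num) (by norm_num)
    (by nlinarith) (by nlinarith)
  obtain ⟨q, hq, hqre, hqN⟩ := hPt
  obtain ⟨u, hu, huc⟩ := conj_lemma q p hq hp hqre
  rw [← hPU]
  exact key_conj hN hp hqN hq rfl hu huc

/-- Every non-central element of `SU(2)` normally generates `SU(2)`. -/
theorem stmt_10 (g : ↥SU2)
    (h1 : ((g : Matrix.unitaryGroup (Fin 2) ℂ) : Matrix (Fin 2) (Fin 2) ℂ) ≠ 1)
    (h2 : ((g : Matrix.unitaryGroup (Fin 2) ℂ) : Matrix (Fin 2) (Fin 2) ℂ) ≠ -1) :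
    Subgroup.normalClosure ({g} : Set ↥SU2) = ⊤ := by
  set N := Subgroup.normalClosure ({g} : Set ↥SU2) with hNdef
  have hN : N.Normal := Subgroup.normalClosure_normal
  obtain ⟨q, hq, hPg⟩ := PhiU_surj g
  have hgN : g ∈ N := Subgroup.subset_normalClosure rfl
  have hMat : Phi q = ((g : Matrix.unitaryGroup (Fin 2) ℂ) : Matrix (Fin 2) (Fin 2) ℂ) := by
    rw [← hPg]; rfl
  have hq1 : q ≠ 1 := by
    intro h
    apply h1
    rw [← hMat, h, Phi_one]
  have hqm1 : q ≠ -1 := by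
    intro h
    apply h2
    rw [← hMat, h, Phi_neg_one]
  have hns : q.re ^ 2 + q.imI ^ 2 + q.imJ ^ 2 + q.imK ^ 2 = 1 :=
    Quaternion.normSq_def' (a := q) ▸ hq
  have hlt : q.re < 1 := by
    have hle : q.re ≤ 1 := by
      nlinarith [sq_nonneg q.imI, sq_nonneg q.imJ, sq_nonneg q.imK, sq_nonneg (q.re - 1)]
    rcases lt_or_eq_of_le hle with h | h
    · exact h
    · exfalso
      apply hq1
      have hI : q.imI = 0 := by nlinarith
      have hJ : q.imJ = 0 := by nlinarith
      have hK : q.imK = 0 := by nlinarith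
      apply Quaternion.ext <;> simp [h, hI, hJ, hK]
  have hgt : -1 < q.re := by
    have hle : -1 ≤ q.re := by
      nlinarith [sq_nonneg q.imI, sq_nonneg q.imJ, sq_nonneg q.imK, sq_nonneg (q.re + 1)]
    rcases lt_or_eq_of_le hle with h | h
    · exact h
    · exfalso
      apply hqm1
      have hI : q.imI = 0 := by nlinarith
      have hJ : q.imJ = 0 := by nlinarith
      have hK : q.imK = 0 := by nlinarith
      apply Quaternion.ext <;> simp [← h, hI, hJ, hK]
  have hP : PP N q.re := ⟨q, hq, rfl, by rwa [hPg]⟩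
  have hpos : 0 < 1 - q.re ^ 2 := by nlinarith
  obtain ⟨n, hn⟩ := pow_unbounded_of_one_lt ((1/2) / (1 - q.re ^ 2)) (by norm_num : (1:ℝ) < 2)
  have hb : 1 / 2 ≤ 2 ^ n * (1 - q.re ^ 2) := by
    rw [div_lt_iff₀ hpos] at hn
    linarith
  have h0 : PP N 0 := stepD hN n q.re hgt hlt hb hP
  exact Subgroup.eq_top_iff' N |>.mpr (memN hN h0)
end
end

section
/- Let F₁, ..., F_n be lifts of orientation-preserving circle homeomorphisms and suppose each F_i is within ε (in sup norm) of a lift R_i of a rigid rotation, i.e. sup_x |F_i(x) - R_i(x)| ≤ ε. Then the translation number of the composition F₁∘⋯∘F_n differs from the translation number of R₁∘⋯∘R_n by at most nε. -/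
open CircleDeg1Lift

lemma aux_bound (ε : ℝ) : ∀ (L : List (CircleDeg1Lift × ℝ)),
    (∀ p ∈ L, ∀ x : ℝ, |p.1 x - (x + p.2)| ≤ ε) →
    ∀ x : ℝ, |(L.map Prod.fst).prod x - (x + (L.map Prod.snd).sum)| ≤ L.length * ε := by
  intro L
  induction L with
  | nil => intro _ x; simp [CircleDeg1Lift.coe_one]
  | cons p L ih =>
    intro hL x
    have h1 := hL p List.mem_cons_self
    have h2 := ih (fun q hq => hL q (List.mem_cons_of_mem _ hq)) x
    simp only [List.map_cons, List.prod_cons, List.sum_cons, List.length_cons,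
      CircleDeg1Lift.mul_apply]
    set y := (L.map Prod.fst).prod x
    have heq : p.1 y - (x + (p.2 + (L.map Prod.snd).sum))
        = (p.1 y - (y + p.2)) + (y - (x + (L.map Prod.snd).sum)) := by ring
    rw [heq]
    calc |(p.1 y - (y + p.2)) + (y - (x + (L.map Prod.snd).sum))|
        ≤ |p.1 y - (y + p.2)| + |y - (x + (L.map Prod.snd).sum)| := abs_add_le _ _
      _ ≤ ε + L.length * ε := add_le_add (h1 y) h2
      _ = (↑(L.length + 1) : ℝ) * ε := by push_cast; ring

/-- If each lift `Fᵢ` is within `ε` (sup norm) of a lift of a rigid rotation (a translation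
`x ↦ x + cᵢ`), then the translation number of the composition `F₁ ∘ ⋯ ∘ Fₙ` differs from that of
the composition of the translations by at most `n ε`. -/
theorem stmt_13 (n : ℕ) (F : Fin n → CircleDeg1Lift)
    (hbij : ∀ i, Function.Bijective (F i)) (c : Fin n → ℝ) (ε : ℝ)
    (h : ∀ i, ∀ x : ℝ, |F i x - (x + c i)| ≤ ε) :
    |((List.ofFn F).prod).translationNumber -
        ((List.ofFn fun i => ((CircleDeg1Lift.translate
          (Multiplicative.ofAdd (c i)) : CircleDeg1Liftˣ) : CircleDeg1Lift)).prod).translationNumber| ≤ n * ε := by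
  -- translation number of the product of translations
  set ψ : Multiplicative ℝ →* CircleDeg1Lift :=
    (Units.coeHom CircleDeg1Lift).comp CircleDeg1Lift.translate
  have l1 : ∀ l : List ℝ, (l.map (fun a => ψ (Multiplicative.ofAdd a))).prod
      = ψ (Multiplicative.ofAdd l.sum) := by
    intro l
    induction l with
    | nil => simp
    | cons a l ih =>
      simp only [List.map_cons, List.prod_cons, List.sum_cons, ih, ← map_mul]
      rfl
  have hψ : (List.ofFn fun i => ((CircleDeg1Lift.translate
      (Multiplicative.ofAdd (c i)) : CircleDeg1Liftˣ) : CircleDeg1Lift)).prod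
      = ψ (Multiplicative.ofAdd (∑ i, c i)) := by
    have : (List.ofFn fun i => ((CircleDeg1Lift.translate
        (Multiplicative.ofAdd (c i)) : CircleDeg1Liftˣ) : CircleDeg1Lift))
        = (List.ofFn c).map (fun a => ψ (Multiplicative.ofAdd a)) := by
      rw [List.map_ofFn]; rfl
    rw [this, l1, List.sum_ofFn]
  have hτ2 : ((List.ofFn fun i => ((CircleDeg1Lift.translate
      (Multiplicative.ofAdd (c i)) : CircleDeg1Liftˣ) : CircleDeg1Lift)).prod).translationNumber
      = ∑ i, c i := by
    rw [hψ]; exact CircleDeg1Lift.translationNumber_translate _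
  -- the bound on the product of F's
  have key := aux_bound ε (List.ofFn fun i => (F i, c i)) (by
    intro p hp x
    rw [List.mem_ofFn] at hp
    obtain ⟨i, rfl⟩ := hp
    exact h i x)
  simp only [List.map_ofFn, List.length_ofFn, List.sum_ofFn] at key
  have key' : ∀ x : ℝ, |(List.ofFn F).prod x - (x + ∑ i, c i)| ≤ n * ε := by
    intro x; have := key x
    simpa [Function.comp_def] using this
  rw [hτ2]
  have hle : ((List.ofFn F).prod).translationNumber ≤ (∑ i, c i) + n * ε :=
    CircleDeg1Lift.translationNumber_le_of_le_add _ fun x => by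
      have := (abs_le.1 (key' x)).2; linarith
  have hge : (∑ i, c i) - n * ε ≤ ((List.ofFn F).prod).translationNumber :=
    CircleDeg1Lift.le_translationNumber_of_add_le _ fun x => by
      have := (abs_le.1 (key' x)).1; linarith
  rw [abs_le]; constructor <;> linarith
end

section
/- Every element of PSL(2,ℝ) is a commutator: for each g ∈ PSL(2,ℝ) there exist a, b ∈ PSL(2,ℝ) with g = a b a⁻¹ b⁻¹. -/
open Matrix

namespace SL2CommAux

abbrev G := Matrix.SpecialLinearGroup (Fin 2) ℝ

instance : Fact (Even (Fintype.card (Fin 2))) := ⟨⟨1, rfl⟩⟩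

lemma neg_one_mem_center : (-1 : G) ∈ Subgroup.center G := by
  rw [Matrix.SpecialLinearGroup.mem_center_iff]
  refine ⟨-1, by norm_num, ?_⟩
  simp only [map_neg (Matrix.scalar (Fin 2)), _root_.map_one]
  rfl

lemma mk_neg (M : G) : (QuotientGroup.mk (-M) : G ⧸ Subgroup.center G) = QuotientGroup.mk M := by
  rw [QuotientGroup.eq]
  have h2 : (-M)⁻¹ * M = -1 := by
    have h : -M = M * (-1) := by rw [mul_neg, mul_one]
    rw [h, _root_.mul_inv_rev, mul_assoc, inv_mul_cancel, mul_one]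
    exact inv_eq_of_mul_eq_one_right (by rw [neg_mul_neg, one_mul])
  rw [h2]
  exact neg_one_mem_center

lemma conj_transfer {H : Type*} [Group H] {g x : H}
    (h : ∃ A B : H, A * B * A⁻¹ * B⁻¹ = x * g * x⁻¹) :
    ∃ A B : H, A * B * A⁻¹ * B⁻¹ = g := by
  obtain ⟨A, B, hAB⟩ := h
  refine ⟨x⁻¹ * A * x, x⁻¹ * B * x, ?_⟩
  calc (x⁻¹*A*x) * (x⁻¹*B*x) * (x⁻¹*A*x)⁻¹ * (x⁻¹*B*x)⁻¹
      = x⁻¹ * (A * B * A⁻¹ * B⁻¹) * x := by group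
  _ = x⁻¹ * (x * g * x⁻¹) * x := by rw [hAB]
  _ = g := by group

def Nmat (x : ℝ) : G := ⟨!![1,0;x,1], by simp [Matrix.det_fin_two_of]⟩
def Emat (y : ℝ) : G := ⟨!![1,y;0,1], by simp [Matrix.det_fin_two_of]⟩

lemma Nmat_inv (x : ℝ) : (Nmat x)⁻¹ = Nmat (-x) := by
  apply inv_eq_of_mul_eq_one_right
  apply Subtype.ext
  show (!![1,0;x,1] : Matrix (Fin 2) (Fin 2) ℝ) * !![1,0;-x,1] = (1 : G).1
  rw [Matrix.SpecialLinearGroup.coe_one]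
  ext i j
  fin_cases i <;> fin_cases j <;> simp [Matrix.mul_apply, Fin.sum_univ_two]

lemma Emat_inv (y : ℝ) : (Emat y)⁻¹ = Emat (-y) := by
  apply inv_eq_of_mul_eq_one_right
  apply Subtype.ext
  show (!![1,y;0,1] : Matrix (Fin 2) (Fin 2) ℝ) * !![1,-y;0,1] = (1 : G).1
  rw [Matrix.SpecialLinearGroup.coe_one]
  ext i j
  fin_cases i <;> fin_cases j <;> simp [Matrix.mul_apply, Fin.sum_univ_two]

lemma conjN_coe (x : ℝ) (M : G) :
    (Nmat x * M * (Nmat x)⁻¹).1 =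
    !![M.1 0 0 - M.1 0 1 * x, M.1 0 1;
       x*(M.1 0 0 - M.1 1 1) + M.1 1 0 - M.1 0 1 * x^2, M.1 1 1 + M.1 0 1 * x] := by
  rw [Nmat_inv]
  show (!![1,0;x,1] : Matrix (Fin 2) (Fin 2) ℝ) * M.1 * !![1,0;-x,1] = _
  ext i j
  fin_cases i <;> fin_cases j <;>
    simp [Matrix.mul_apply, Matrix.vecMul, dotProduct, Fin.sum_univ_two] <;> ring

lemma conjE_coe (y : ℝ) (M : G) :
    (Emat y * M * (Emat y)⁻¹).1 =
    !![M.1 0 0 + M.1 1 0 * y, y*(M.1 1 1 - M.1 0 0) + M.1 0 1 - M.1 1 0 * y^2;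
       M.1 1 0, M.1 1 1 - M.1 1 0 * y] := by
  rw [Emat_inv]
  show (!![1,y;0,1] : Matrix (Fin 2) (Fin 2) ℝ) * M.1 * !![1,-y;0,1] = _
  ext i j
  fin_cases i <;> fin_cases j <;>
    simp [Matrix.mul_apply, Matrix.vecMul, dotProduct, Fin.sum_univ_two] <;> ring

lemma core (M : G) (ha : M.1 0 0 < 0) (hd : 2 < M.1 1 1)
    (htr : M.1 0 0 + M.1 1 1 ≠ 2) : ∃ A B : G, A * B * A⁻¹ * B⁻¹ = M := by
  obtain ⟨a, b, c, d, ha00, hb01, hc10, hd11, hdet⟩ :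
      ∃ a b c d : ℝ, M.1 0 0 = a ∧ M.1 0 1 = b ∧ M.1 1 0 = c ∧ M.1 1 1 = d ∧
        a * d - b * c = 1 := by
    refine ⟨_, _, _, _, rfl, rfl, rfl, rfl, ?_⟩
    have := M.2
    rwa [Matrix.det_fin_two] at this
  rw [ha00] at ha htr; rw [hd11] at hd htr
  have hMcoe : M.1 = !![a, b; c, d] := by
    rw [← ha00, ← hb01, ← hc10, ← hd11]; exact (Matrix.etaExpand_eq M.1).symm ▸ rfl
  have hd1 : d - 1 ≠ 0 := by linarith
  have hd1' : (0:ℝ) < d - 1 := by linarith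
  have ha1 : (0:ℝ) < 1 - a := by linarith
  have hw : (2:ℝ) - a - d ≠ 0 := fun h => htr (by linarith)
  set u : ℝ := (1 - a) / (d - 1) with hu_def
  have hu_pos : 0 < u := div_pos ha1 hd1'
  set t : ℝ := Real.sqrt u with ht_def
  have ht_pos : 0 < t := Real.sqrt_pos.mpr hu_pos
  have ht : t ≠ 0 := ne_of_gt ht_pos
  have ht2 : t * t = u := Real.mul_self_sqrt hu_pos.le
  set p : ℝ := b * (d - 1) / (2 - a - d) with hp_def
  set r : ℝ := (1 - a) * (d - 1) / (2 - a - d) with hr_def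
  set s : ℝ := -c / (d - 1) with hs_def
  clear_value u t p r s
  have hBdet : p * s - 1 * r = 1 := by
    rw [hp_def, hs_def, hr_def]
    field_simp
    linear_combination hdet
  have hAdet : Matrix.det !![t, 0; 0, t⁻¹] = 1 := by
    simp [Matrix.det_fin_two_of, mul_inv_cancel₀ ht]
  have hBdet' : Matrix.det !![p, 1; r, s] = 1 := by
    simpa [Matrix.det_fin_two_of] using hBdet
  have main : ∀ A B : G, A.1 = !![t, 0; 0, t⁻¹] → B.1 = !![p, 1; r, s] →
      A * B * A⁻¹ * B⁻¹ = M := by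
    intro A B hA hB
    have e1 : p = a * p + b * r := by
      rw [hp_def, hr_def]; field_simp; ring
    have e2 : u = a + b * s := by
      rw [hs_def, hu_def]; field_simp; linear_combination -hdet
    have e3 : r = u * (c * p + d * r) := by
      rw [hr_def, hp_def, hu_def]
      field_simp
      linear_combination hdet
    have e4 : s = c + d * s := by
      rw [hs_def]; field_simp; ring
    have key : A * B = M * B * A := by
      apply Subtype.ext
      show (A*B).1 = (M*B*A).1
      simp only [Matrix.SpecialLinearGroup.coe_mul, hMcoe, hA, hB]
      ext i j
      fin_cases i <;> fin_cases j <;>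
        simp [Matrix.mul_apply, Fin.sum_univ_two]
      · linear_combination t * e1
      · field_simp
        linear_combination ht2 + e2
      · field_simp
        linear_combination e3 - (c * p + d * r) * ht2
      · linear_combination t⁻¹ * e4
    calc A * B * A⁻¹ * B⁻¹ = A * B * (B * A)⁻¹ := by group
    _ = M := by rw [key]; group
  exact ⟨⟨_, hAdet⟩, ⟨_, hBdet'⟩, main _ _ rfl rfl⟩
lemma step_b (M : G) (htr : M.1 0 0 + M.1 1 1 ≠ 2) (hb : M.1 0 1 ≠ 0) :
    ∃ A B : G, A * B * A⁻¹ * B⁻¹ = M := by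
  set τ := M.1 0 0 + M.1 1 1 with hτ
  set x := (|τ| + 3 - M.1 1 1) / M.1 0 1 with hx
  have hxx : M.1 0 1 * x = |τ| + 3 - M.1 1 1 := by
    rw [hx, mul_div_cancel₀ _ hb]
  have habs : τ ≤ |τ| := le_abs_self τ
  have habs0 : 0 ≤ |τ| := abs_nonneg τ
  apply conj_transfer (x := Nmat x)
  apply core <;> rw [conjN_coe] <;> simp only [Matrix.cons_val', Matrix.cons_val_zero,
    Matrix.cons_val_one, Matrix.head_cons, Matrix.empty_val', Matrix.cons_val_fin_one,
    Matrix.head_fin_const, Matrix.of_apply] <;> rw [hxx]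
  · linarith
  · linarith
  · exact fun h => htr (by linarith)

lemma step_c (M : G) (htr : M.1 0 0 + M.1 1 1 ≠ 2) (hc : M.1 1 0 ≠ 0) :
    ∃ A B : G, A * B * A⁻¹ * B⁻¹ = M := by
  set τ := M.1 0 0 + M.1 1 1 with hτ
  set y := (M.1 1 1 - |τ| - 3) / M.1 1 0 with hy
  have hyy : M.1 1 0 * y = M.1 1 1 - |τ| - 3 := by
    rw [hy, mul_div_cancel₀ _ hc]
  have habs : τ ≤ |τ| := le_abs_self τ
  have habs0 : 0 ≤ |τ| := abs_nonneg τ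
  apply conj_transfer (x := Emat y)
  apply core <;> rw [conjE_coe] <;> simp only [Matrix.cons_val', Matrix.cons_val_zero,
    Matrix.cons_val_one, Matrix.head_cons, Matrix.empty_val', Matrix.cons_val_fin_one,
    Matrix.head_fin_const, Matrix.of_apply] <;> rw [hyy]
  · linarith
  · linarith
  · exact fun h => htr (by linarith)

lemma step_diag (M : G) (htr : M.1 0 0 + M.1 1 1 ≠ 2) (hb : M.1 0 1 = 0)
    (hc : M.1 1 0 = 0) (hne : M.1 0 0 ≠ M.1 1 1) : ∃ A B : G, A * B * A⁻¹ * B⁻¹ = M := by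
  apply conj_transfer (x := Nmat 1)
  apply step_c <;> rw [conjN_coe] <;> simp only [Matrix.cons_val', Matrix.cons_val_zero,
    Matrix.cons_val_one, Matrix.head_cons, Matrix.empty_val', Matrix.cons_val_fin_one,
    Matrix.head_fin_const, Matrix.of_apply] <;> simp only [hb, hc]
  · simpa using htr
  · exact fun h => hne (by linarith)

lemma exists_commutator (M : G) (htr : M.1 0 0 + M.1 1 1 ≠ 2) (hM : M ≠ -1) :
    ∃ A B : G, A * B * A⁻¹ * B⁻¹ = M := by
  by_cases hb : M.1 0 1 = 0
  · by_cases hc : M.1 1 0 = 0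
    · have hdet := M.2
      rw [Matrix.det_fin_two] at hdet
      rw [hb, hc] at hdet
      have had : M.1 0 0 * M.1 1 1 = 1 := by linarith
      have hne : M.1 0 0 ≠ M.1 1 1 := by
        intro h
        rw [← h] at had
        rcases mul_self_eq_one_iff.mp had with h1 | h1
        · exact htr (by rw [← h, h1]; norm_num)
        · apply hM
          apply Subtype.ext
          have h11 : M.1 1 1 = -1 := by rw [← h, h1]
          show M.1 = ((-1 : G) : Matrix (Fin 2) (Fin 2) ℝ)
          rw [Matrix.SpecialLinearGroup.coe_neg, Matrix.SpecialLinearGroup.coe_one]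
          ext i j
          fin_cases i <;> fin_cases j <;>
            simp [h1, h11, hb, hc, Matrix.one_apply]
      exact step_diag M htr hb hc hne
    · exact step_c M htr hc
  · exact step_b M htr hb

end SL2CommAux
open SL2CommAux

/-- Every element of `PSL(2,ℝ) = SL(2,ℝ)/center` is a commutator. -/
theorem stmt_16
    (g : Matrix.SpecialLinearGroup (Fin 2) ℝ ⧸
      Subgroup.center (Matrix.SpecialLinearGroup (Fin 2) ℝ)) :
    ∃ a b : Matrix.SpecialLinearGroup (Fin 2) ℝ ⧸
      Subgroup.center (Matrix.SpecialLinearGroup (Fin 2) ℝ),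
      g = a * b * a⁻¹ * b⁻¹ := by
  induction g using QuotientGroup.induction_on with
  | H M =>
  by_cases h1 : M = 1
  · exact ⟨1, 1, by simp [h1]⟩
  by_cases htr : M.1 0 0 + M.1 1 1 = 2
  · have htr' : (-M).1 0 0 + (-M).1 1 1 ≠ 2 := by
      rw [Matrix.SpecialLinearGroup.coe_neg]
      simp only [Matrix.neg_apply]
      intro h
      have h00 : M.1 0 0 + M.1 1 1 = -2 := by linarith
      rw [htr] at h00; norm_num at h00
    have hM' : (-M : G) ≠ -1 := fun h => h1 (neg_injective h)
    obtain ⟨A, B, hAB⟩ := exists_commutator (-M) htr' hM'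
    refine ⟨QuotientGroup.mk A, QuotientGroup.mk B, ?_⟩
    rw [← mk_neg, ← hAB]
    rfl
  · by_cases hneg : M = -1
    · refine ⟨1, 1, ?_⟩
      rw [hneg, show ((-1 : G) = -(1:G)) from rfl, mk_neg]
      simp
    obtain ⟨A, B, hAB⟩ := exists_commutator M htr hneg
    exact ⟨QuotientGroup.mk A, QuotientGroup.mk B, by rw [← hAB]; rfl⟩
end
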